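/- (Two-qubit factorization law) Let |ψ^{AB}⟩ = √ω_0 |0⟩|β_0⟩ + √ω_1 |1⟩|β_1⟩ with ω_0 + ω_1 = 1 be a two-qubit state, |φ^{AB}⟩ = (1/√2)(|0⟩|β_0⟩ + |1⟩|β_1⟩), and $(X) = Σ_n F_n X F_n† a trace-preserving CP map on B. Then C̄^{A|B}(|ψ⟩) = E(|ψ⟩) · C̄^{A|B}(|φ⟩), where E(|ψ⟩) = 2√(ω_0 ω_1) is the concurrence and C̄^{A|B} is the average post-measurement l1-coherence of A over the Kraus outcomes. -/

import Mathlib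

open Matrix Kronecker BigOperators Finset ComplexOrder

noncomputable def l1Coh {d : ℕ} (ρ : Matrix (Fin d) (Fin d) ℂ) : ℝ :=
  ∑ i, ∑ j, if i ≠ j then ‖ρ i j‖ else 0

noncomputable def ptraceB {dA dB : ℕ}
    (ρ : Matrix (Fin dA × Fin dB) (Fin dA × Fin dB) ℂ) : Matrix (Fin dA) (Fin dA) ℂ :=
  fun i k => ∑ j, ρ (i, j) (k, j)

noncomputable def postA {dA dB : ℕ} (F : Matrix (Fin dB) (Fin dB) ℂ)
    (χ : Fin dA × Fin dB → ℂ) : Matrix (Fin dA) (Fin dA) ℂ :=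
  ptraceB (((1 : Matrix (Fin dA) (Fin dA) ℂ) ⊗ₖ F) * Matrix.vecMulVec χ (star χ) *
    ((1 : Matrix (Fin dA) (Fin dA) ℂ) ⊗ₖ F)ᴴ)

/-- Average remotely created coherence over the Kraus outcomes. -/
noncomputable def avgRCC {dA dB : ℕ} {ι : Type*} [Fintype ι]
    (F : ι → Matrix (Fin dB) (Fin dB) ℂ) (χ : Fin dA × Fin dB → ℂ) : ℝ :=
  ∑ n, if 0 < ((postA (F n) χ).trace).re then
      ((postA (F n) χ).trace).re *
        l1Coh (((((postA (F n) χ).trace).re : ℂ))⁻¹ • postA (F n) χ)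
    else 0

lemma postA_apply (F : Matrix (Fin 2) (Fin 2) ℂ) (χ : Fin 2 × Fin 2 → ℂ) (i k : Fin 2) :
    postA F χ i k = ∑ j : Fin 2, (∑ m : Fin 2, F j m * χ (i, m)) *
      (starRingEnd ℂ) (∑ p : Fin 2, F j p * χ (k, p)) := by
  fin_cases i <;> fin_cases k <;>
  simp [postA, ptraceB, Matrix.mul_apply, Matrix.conjTranspose_apply, Matrix.vecMulVec_apply,
    Matrix.kroneckerMap_apply, Matrix.one_apply, Fintype.sum_prod_type, Fin.sum_univ_two,
    map_add, _root_.map_mul, Complex.star_def]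
  <;> ring

noncomputable def gm (F : Matrix (Fin 2) (Fin 2) ℂ) (β : Fin 2 → Fin 2 → ℂ) (i k : Fin 2) : ℂ :=
  ∑ j : Fin 2, (∑ m : Fin 2, F j m * β i m) * (starRingEnd ℂ) (∑ m : Fin 2, F j m * β k m)

lemma gm_diag (F : Matrix (Fin 2) (Fin 2) ℂ) (β : Fin 2 → Fin 2 → ℂ) (i : Fin 2) :
    (gm F β i i).re = ∑ j : Fin 2, Complex.normSq (∑ m : Fin 2, F j m * β i m) := by
  have : gm F β i i = ((∑ j : Fin 2, Complex.normSq (∑ m : Fin 2, F j m * β i m) : ℝ) : ℂ) := by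
    simp only [gm, Complex.mul_conj, Complex.ofReal_sum]
  rw [this, Complex.ofReal_re]

lemma gm_diag_nonneg (F : Matrix (Fin 2) (Fin 2) ℂ) (β : Fin 2 → Fin 2 → ℂ) (i : Fin 2) :
    0 ≤ (gm F β i i).re := by
  rw [gm_diag]
  exact Finset.sum_nonneg fun j _ => Complex.normSq_nonneg _

lemma gm_zero (F : Matrix (Fin 2) (Fin 2) ℂ) (β : Fin 2 → Fin 2 → ℂ) {i : Fin 2}
    (h : (gm F β i i).re = 0) (k : Fin 2) : gm F β i k = 0 := by
  rw [gm_diag] at h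
  have hz := (Finset.sum_eq_zero_iff_of_nonneg (fun j _ => Complex.normSq_nonneg _)).mp h
  refine Finset.sum_eq_zero fun j _ => ?_
  rw [Complex.normSq_eq_zero.mp (hz j (Finset.mem_univ j)), zero_mul]

lemma gm_symm (F : Matrix (Fin 2) (Fin 2) ℂ) (β : Fin 2 → Fin 2 → ℂ) (i k : Fin 2) :
    gm F β k i = (starRingEnd ℂ) (gm F β i k) := by
  rw [gm, gm, map_sum]
  refine Finset.sum_congr rfl fun j _ => ?_
  rw [_root_.map_mul, Complex.conj_conj, mul_comm]

lemma l1Coh_two (ρ : Matrix (Fin 2) (Fin 2) ℂ) :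
    l1Coh ρ = ‖ρ 0 1‖ + ‖ρ 1 0‖ := by
  simp [l1Coh, Fin.sum_univ_two]

lemma key_term (ω : Fin 2 → ℝ) (hω : ∀ i, 0 ≤ ω i)
    (β : Fin 2 → Fin 2 → ℂ) (ψ φ : Fin 2 × Fin 2 → ℂ)
    (hψ : ∀ i j, ψ (i, j) = (Real.sqrt (ω i) : ℂ) * β i j)
    (hφ : ∀ i j, φ (i, j) = ((Real.sqrt 2 : ℝ) : ℂ)⁻¹ * β i j)
    (F : Matrix (Fin 2) (Fin 2) ℂ) :
    (if 0 < ((postA F ψ).trace).re then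
      ((postA F ψ).trace).re * l1Coh (((((postA F ψ).trace).re : ℂ))⁻¹ • postA F ψ)
    else 0)
    = (2 * Real.sqrt (ω 0 * ω 1)) *
      (if 0 < ((postA F φ).trace).re then
        ((postA F φ).trace).re * l1Coh (((((postA F φ).trace).re : ℂ))⁻¹ • postA F φ)
      else 0) := by
  set a := Real.sqrt (ω 0) with ha
  set b := Real.sqrt (ω 1) with hb
  have ha0 : 0 ≤ a := Real.sqrt_nonneg _
  have hb0 : 0 ≤ b := Real.sqrt_nonneg _
  have hA : ∀ i k, postA F ψ i k
      = ((Real.sqrt (ω i) * Real.sqrt (ω k) : ℝ) : ℂ) * gm F β i k := by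
    intro i k
    rw [postA_apply]
    simp only [hψ, gm, Fin.sum_univ_two, _root_.map_mul, map_add, Complex.conj_ofReal,
      Complex.ofReal_mul]
    ring
  have hc : (((Real.sqrt 2 : ℝ) : ℂ))⁻¹ * (((Real.sqrt 2 : ℝ) : ℂ))⁻¹ = ((2⁻¹ : ℝ) : ℂ) := by
    rw [← mul_inv, ← Complex.ofReal_mul, Real.mul_self_sqrt (by norm_num : (0:ℝ) ≤ 2)]
    norm_num
  have hB : ∀ i k, postA F φ i k = ((2⁻¹ : ℝ) : ℂ) * gm F β i k := by
    intro i k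
    rw [postA_apply, ← hc]
    simp only [hφ, gm, Fin.sum_univ_two, _root_.map_mul, map_add, map_inv₀,
      Complex.conj_ofReal]
    ring
  set G0 := (gm F β 0 0).re with hG0def
  set G1 := (gm F β 1 1).re with hG1def
  set c := ‖gm F β 0 1‖ with hcdef
  have hG0 : 0 ≤ G0 := gm_diag_nonneg F β 0
  have hG1 : 0 ≤ G1 := gm_diag_nonneg F β 1
  have hc10 : ‖gm F β 1 0‖ = c := by
    rw [gm_symm]; exact Complex.norm_conj _
  have htψ : ((postA F ψ).trace).re = ω 0 * G0 + ω 1 * G1 := by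
    rw [Matrix.trace]
    simp only [Fin.sum_univ_two, Matrix.diag_apply, hA, Complex.add_re,
      Real.mul_self_sqrt (hω 0), Real.mul_self_sqrt (hω 1)]
    simp [Complex.mul_re, hG0def, hG1def]
  have htφ : ((postA F φ).trace).re = 2⁻¹ * G0 + 2⁻¹ * G1 := by
    rw [Matrix.trace]
    simp only [Fin.sum_univ_two, Matrix.diag_apply, hB, Complex.add_re]
    simp [Complex.mul_re, hG0def, hG1def]
  have hl1A : ∀ t : ℝ, 0 < t →
      t * l1Coh (((t : ℝ) : ℂ)⁻¹ • postA F ψ) = 2 * (a * b * c) := by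
    intro t ht
    rw [l1Coh_two]
    simp only [Matrix.smul_apply, smul_eq_mul, hA, norm_mul, norm_inv,
      Complex.norm_real, Real.norm_eq_abs, ← hcdef, hc10]
    rw [abs_of_pos ht, abs_of_nonneg (Real.sqrt_nonneg (ω 0)), abs_of_nonneg (Real.sqrt_nonneg (ω 1)), ← ha, ← hb]
    field_simp
    ring
  have hl1B : ∀ t : ℝ, 0 < t →
      t * l1Coh (((t : ℝ) : ℂ)⁻¹ • postA F φ) = c := by
    intro t ht
    rw [l1Coh_two]
    simp only [Matrix.smul_apply, smul_eq_mul, hB, norm_mul, norm_inv,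
      Complex.norm_real, Real.norm_eq_abs, ← hcdef, hc10]
    rw [abs_of_pos ht]
    rw [show |(2 : ℝ)| = 2 by norm_num]
    field_simp
    ring
  rw [htψ, htφ]
  have hab : Real.sqrt (ω 0 * ω 1) = a * b := Real.sqrt_mul (hω 0) _
  by_cases hφpos : 0 < 2⁻¹ * G0 + 2⁻¹ * G1
  · rw [if_pos hφpos, hl1B _ hφpos]
    by_cases hψpos : 0 < ω 0 * G0 + ω 1 * G1
    · rw [if_pos hψpos, hl1A _ hψpos, hab]; ring
    · rw [if_neg hψpos]
      push_neg at hψpos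
      have h00 : ω 0 * G0 = 0 := by nlinarith [mul_nonneg (hω 0) hG0, mul_nonneg (hω 1) hG1]
      rcases mul_eq_zero.mp h00 with h | h
      · rw [hab, ha, h, Real.sqrt_zero]; ring
      · have hcz : c = 0 := by rw [hcdef, gm_zero F β h 1, norm_zero]
        rw [hcz]; ring
  · rw [if_neg hφpos]
    push_neg at hφpos
    have hg0 : G0 = 0 := by nlinarith
    have hg1 : G1 = 0 := by nlinarith
    have hne : ¬ 0 < ω 0 * G0 + ω 1 * G1 := by rw [hg0, hg1]; simp
    rw [if_neg hne]; ring

/-- Theorem 4 (two-qubit factorization law):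
`C̄^{A|B}(ψ) = E(ψ)·C̄^{A|B}(φ)` with `E(ψ) = 2√(ω₀ω₁)`. -/
theorem two_qubit_factorization_law
    {ι : Type*} [Fintype ι]
    (ω : Fin 2 → ℝ) (hω : ∀ i, 0 ≤ ω i) (hωsum : ω 0 + ω 1 = 1)
    (β : Fin 2 → Fin 2 → ℂ)
    (hβ : ∀ i k, ∑ j, (starRingEnd ℂ) (β i j) * β k j = if i = k then 1 else 0)
    (ψ φ : Fin 2 × Fin 2 → ℂ)
    (hψ : ∀ i j, ψ (i, j) = (Real.sqrt (ω i) : ℂ) * β i j)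
    (hφ : ∀ i j, φ (i, j) = ((Real.sqrt 2 : ℝ) : ℂ)⁻¹ * β i j)
    (F : ι → Matrix (Fin 2) (Fin 2) ℂ)
    (htp : ∑ n, (F n)ᴴ * (F n) = (1 : Matrix (Fin 2) (Fin 2) ℂ)) :
    avgRCC F ψ = (2 * Real.sqrt (ω 0 * ω 1)) * avgRCC F φ := by
  rw [avgRCC, avgRCC, Finset.mul_sum]
  exact Finset.sum_congr rfl fun n _ => key_term ω hω β ψ φ hψ hφ (F n)
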